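/- For every n ≥ 6 and every subset D ⊆ [n]\{1,2,3,4} with |D| ≥ 2, the 3-graph H_2 satisfies λ(H_2) ≤ √3/18, where H_2 is the 3-graph on vertex set [n] whose edge set is ( {e ⊆ [n] : |e|=3, e ∩ {1,2} ≠ ∅} \ {{2,i,j} : i,j ∈ D, i ≠ j} ) ∪ {{3,4,i} : i ∈ D}. -/

import Mathlib

open Finset

/-- An `r`-uniform hypergraph (r-graph) with vertices drawn from `ℕ`. -/
structure HyperGraph (r : ℕ) where
  verts : Finset ℕ
  edges : Finset (Finset ℕ)
  edges_sub : ∀ e ∈ edges, e ⊆ verts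
  card_eq : ∀ e ∈ edges, e.card = r

/-- A 3-uniform hypergraph (3-graph). -/
abbrev ThreeGraph := HyperGraph 3

/-- A feasible weight vector on `G`: nonnegative weights on the vertices summing to 1. -/
def HyperGraph.IsFeasible {r : ℕ} (G : HyperGraph r) (w : ℕ → ℝ) : Prop :=
  (∀ v ∈ G.verts, 0 ≤ w v) ∧ ∑ v ∈ G.verts, w v = 1

/-- The Lagrangian function `λ(G, w) = Σ_{e ∈ E(G)} Π_{v ∈ e} w v`. -/
noncomputable def HyperGraph.lagFun {r : ℕ} (G : HyperGraph r) (w : ℕ → ℝ) : ℝ :=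
  ∑ e ∈ G.edges, ∏ v ∈ e, w v

/-- The Lagrangian `λ(G)`: the maximum of `λ(G, w)` over feasible weight vectors. -/
noncomputable def HyperGraph.lag {r : ℕ} (G : HyperGraph r) : ℝ :=
  sSup {x : ℝ | ∃ w, G.IsFeasible w ∧ G.lagFun w = x}

/-- `G` contains a copy of `F`: an injection of the vertices of `F` into those of `G`
mapping every edge of `F` to an edge of `G`. -/
def HyperGraph.ContainsCopy {r : ℕ} (G F : HyperGraph r) : Prop :=
  ∃ f : ℕ → ℕ, Set.InjOn f ↑F.verts ∧ (∀ v ∈ F.verts, f v ∈ G.verts) ∧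
    ∀ e ∈ F.edges, e.image f ∈ G.edges

/-- `G` is `F`-free. -/
def HyperGraph.Free {r : ℕ} (G F : HyperGraph r) : Prop := ¬ G.ContainsCopy F

/-- `H` is a subgraph of `G`. -/
def HyperGraph.IsSubgraph {r : ℕ} (H G : HyperGraph r) : Prop :=
  H.verts ⊆ G.verts ∧ H.edges ⊆ G.edges

/-- `G` is dense: every proper subgraph has strictly smaller Lagrangian. -/
def HyperGraph.LagDense {r : ℕ} (G : HyperGraph r) : Prop :=
  ∀ H : HyperGraph r, H.IsSubgraph G → (H.verts ≠ G.verts ∨ H.edges ≠ G.edges) →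
    H.lag < G.lag

/-- The Lagrangian density `π_λ(F) = sup { r! · λ(G) : G is F-free }`. -/
noncomputable def lagDensity {r : ℕ} (F : HyperGraph r) : ℝ :=
  sSup {x : ℝ | ∃ G : HyperGraph r, G.Free F ∧ x = (Nat.factorial r : ℝ) * G.lag}

/-- An optimum weight vector for `G`. -/
def HyperGraph.IsOptimal {r : ℕ} (G : HyperGraph r) (w : ℕ → ℝ) : Prop :=
  G.IsFeasible w ∧ G.lagFun w = G.lag

/-- `K_4^3 ∪ e`: the disjoint union of the complete 3-graph on `{1,2,3,4}`
and the single edge `{5,6,7}`. -/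
def K43e : ThreeGraph where
  verts := {1, 2, 3, 4, 5, 6, 7}
  edges := {{1, 2, 3}, {1, 2, 4}, {1, 3, 4}, {2, 3, 4}, {5, 6, 7}}
  edges_sub := by decide
  card_eq := by decide

/-- `H_2` (for `n ≥ 6` and `D ⊆ [n] \ {1,2,3,4}`): the 3-graph on `[n]` whose edges are
the 3-subsets meeting `{1, 2}`, minus all edges `{2, i, j}` with `i, j ∈ D`, `i ≠ j`,
plus the edges `{3, 4, i}` for `i ∈ D`. -/
def H2 (n : ℕ) (D : Finset ℕ) (hn : 6 ≤ n)
    (hD : D ⊆ Finset.Icc 1 n \ ({1, 2, 3, 4} : Finset ℕ)) : ThreeGraph where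
  verts := Finset.Icc 1 n
  edges := ((((Finset.Icc 1 n).powersetCard 3).filter
        (fun e => (e ∩ ({1, 2} : Finset ℕ)).Nonempty)) \
      ((D.powersetCard 2).image (insert 2))) ∪
    D.image (fun i => {3, 4, i})
  edges_sub := by
    intro e he
    rw [Finset.mem_union] at he
    rcases he with h | h
    · have h' := (Finset.mem_sdiff.mp h).1
      rw [Finset.mem_filter, Finset.mem_powersetCard] at h'
      exact h'.1.1
    · obtain ⟨i, hi, rfl⟩ := Finset.mem_image.mp h
      have hi' := hD hi
      rw [Finset.mem_sdiff, Finset.mem_Icc] at hi'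
      intro v hv
      simp only [Finset.mem_insert, Finset.mem_singleton] at hv
      rw [Finset.mem_Icc]
      rcases hv with rfl | rfl | rfl
      · omega
      · omega
      · exact hi'.1
  card_eq := by
    intro e he
    rw [Finset.mem_union] at he
    rcases he with h | h
    · have h' := (Finset.mem_sdiff.mp h).1
      rw [Finset.mem_filter, Finset.mem_powersetCard] at h'
      exact h'.1.2
    · obtain ⟨i, hi, rfl⟩ := Finset.mem_image.mp h
      have hi' := hD hi
      simp only [Finset.mem_sdiff, Finset.mem_insert, Finset.mem_singleton] at hi'
      have h3 : (3 : ℕ) ∉ ({4, i} : Finset ℕ) := by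
        simp only [Finset.mem_insert, Finset.mem_singleton]
        omega
      have h4 : (4 : ℕ) ∉ ({i} : Finset ℕ) := by
        simp only [Finset.mem_singleton]
        omega
      rw [Finset.card_insert_of_notMem h3, Finset.card_insert_of_notMem h4,
        Finset.card_singleton]


private lemma case2 (x y a d : ℝ) (hx : 0 ≤ x) (hy : 0 ≤ y) (ha : 0 ≤ a)
    (hsum : x + y + a + d = 1) (hds : x + y ≤ d) :
    x*y*(a+d) + (x+y)*(a+d)^2/2 - y*d^2/2 + a^2*(d-(x+y))/4 ≤ 9/100 := by
  have ht : (0:ℝ) ≤ d - (x + y) := by linarith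
  have hid : 9/100*(x+y+a+d)^3 - (x*y*(a+d) + (x+y)*(a+d)^2/2 - y*d^2/2 + a^2*(d-(x+y))/4)
      = 2/25*(a*(x-y)^2) + 1/25*(x*(y-a)^2) + 1/25*(y*(x-a)^2)
      + (1300000/10875087)*((87/100*x+129/100*y+323/500*a)*((87/100*x-129/100*y)^2+(129/100*y-323/500*a)^2+(323/500*a-87/100*x)^2))
      + 9/100*(d-(x+y))^3 + 27/100*(a*(d-(x+y))^2) + 1/50*(a^2*(d-(x+y))) + (2150417/84172500)*a^3
      + 27/50*(y*(d-(x+y))^2) + 2/25*(y*a*(d-(x+y))) + 27/25*(y^2*(d-(x+y))) + (48421/234175)*y^3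
      + 1/25*(x*(d-(x+y))^2) + 2/25*(x*a*(d-(x+y))) + 4/25*(x*y*(d-(x+y))) + 31/50*(x*y^2)
      + 2/25*(x^2*(d-(x+y))) + 3/25*(x^2*y) + (43449/694450)*x^3 := by ring
  have h9 : (9:ℝ)/100*(x+y+a+d)^3 = 9/100 := by rw [hsum]; norm_num
  have t1 : (0:ℝ) ≤ a*(x-y)^2 := mul_nonneg ha (sq_nonneg _)
  have t2 : (0:ℝ) ≤ x*(y-a)^2 := mul_nonneg hx (sq_nonneg _)
  have t3 : (0:ℝ) ≤ y*(x-a)^2 := mul_nonneg hy (sq_nonneg _)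
  have t4 : (0:ℝ) ≤ (87/100*x+129/100*y+323/500*a)*((87/100*x-129/100*y)^2+(129/100*y-323/500*a)^2+(323/500*a-87/100*x)^2) :=
    mul_nonneg (by linarith) (by positivity)
  have t5 : (0:ℝ) ≤ (d-(x+y))^3 := pow_nonneg ht 3
  have t6 : (0:ℝ) ≤ a*(d-(x+y))^2 := mul_nonneg ha (sq_nonneg _)
  have t7 : (0:ℝ) ≤ a^2*(d-(x+y)) := mul_nonneg (sq_nonneg _) ht
  have t8 : (0:ℝ) ≤ a^3 := pow_nonneg ha 3
  have t9 : (0:ℝ) ≤ y*(d-(x+y))^2 := mul_nonneg hy (sq_nonneg _)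
  have t10 : (0:ℝ) ≤ y*a*(d-(x+y)) := mul_nonneg (mul_nonneg hy ha) ht
  have t11 : (0:ℝ) ≤ y^2*(d-(x+y)) := mul_nonneg (sq_nonneg _) ht
  have t12 : (0:ℝ) ≤ y^3 := pow_nonneg hy 3
  have t13 : (0:ℝ) ≤ x*(d-(x+y))^2 := mul_nonneg hx (sq_nonneg _)
  have t14 : (0:ℝ) ≤ x*a*(d-(x+y)) := mul_nonneg (mul_nonneg hx ha) ht
  have t15 : (0:ℝ) ≤ x*y*(d-(x+y)) := mul_nonneg (mul_nonneg hx hy) ht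
  have t16 : (0:ℝ) ≤ x*y^2 := mul_nonneg hx (sq_nonneg _)
  have t17 : (0:ℝ) ≤ x^2*(d-(x+y)) := mul_nonneg (sq_nonneg _) ht
  have t18 : (0:ℝ) ≤ x^2*y := mul_nonneg (sq_nonneg _) hy
  have t19 : (0:ℝ) ≤ x^3 := pow_nonneg hx 3
  linarith

set_option maxHeartbeats 1000000 in
private lemma final_bound (x y a d u p qA qD r : ℝ) (hx : 0 ≤ x) (hy : 0 ≤ y) (ha : 0 ≤ a)
    (hd : 0 ≤ d) (hu : 0 ≤ u) (hua : u ≤ a) (hqD : 0 ≤ qD) (hqA : u^2/2 ≤ qA)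
    (hp : p ≤ u^2/4) (hsum : x + y + a + d = 1) (hr2 : r^2 = 3) (hr : 17/10 ≤ r) :
    x*((y+(a+d))^2 - y^2 - qA - qD)/2 + y*((a+d)^2 - d^2 - qA)/2 + p*d ≤ r/18 := by
  have hM : x*((y+(a+d))^2 - y^2 - qA - qD)/2 + y*((a+d)^2 - d^2 - qA)/2 + p*d
      ≤ x*y*(a+d) + (x+y)*(a+d)^2/2 - y*d^2/2 + u^2*(d-(x+y))/4 := by
    nlinarith [mul_nonneg (add_nonneg hx hy) (by linarith : (0:ℝ) ≤ qA - u^2/2),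
      mul_nonneg hx hqD, mul_nonneg hd (by linarith : (0:ℝ) ≤ u^2/4 - p)]
  rcases le_total d (x+y) with hc | hc
  · have h1 : u^2*(d-(x+y))/4 ≤ 0 := by
      have := mul_nonneg (sq_nonneg u) (by linarith : (0:ℝ) ≤ (x+y) - d)
      nlinarith
    have hm : a + d = 1 - (x+y) := by linarith
    have h2 : x*y*(a+d) + (x+y)*(a+d)^2/2 - y*d^2/2 ≤ (x+y)*(1-(x+y))*(2-(x+y))/4 := by
      rw [hm]
      nlinarith [mul_nonneg (sq_nonneg (x-y)) (by linarith : (0:ℝ) ≤ 1 - (x+y)),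
        mul_nonneg hy (sq_nonneg d)]
    have h3 : (x+y)*(1-(x+y))*(2-(x+y))/4 ≤ r/18 := by
      have hs1 : x + y ≤ 1 := by linarith
      have hs0 : 0 ≤ x + y := by linarith
      nlinarith [mul_nonneg (sq_nonneg ((x+y) - (1 - r/3)))
        (sub_nonneg.mpr (le_trans hs1 (by nlinarith : (1:ℝ) ≤ 1 + 2*r/3))), sq_nonneg r]
    linarith
  · have h1 : u^2*(d-(x+y))/4 ≤ a^2*(d-(x+y))/4 := by
      have h := mul_nonneg (mul_nonneg (by linarith : (0:ℝ) ≤ a - u) (by linarith : (0:ℝ) ≤ a + u))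
        (by linarith : (0:ℝ) ≤ d - (x+y))
      nlinarith
    have h2 := case2 x y a d hx hy ha hsum hc
    have h3 : (9:ℝ)/100 ≤ r/18 := by linarith
    linarith


private lemma sum_image_insert (t : ℕ) (T : Finset ℕ) (k : ℕ) (h : t ∉ T) (w : ℕ → ℝ) :
    ∑ e ∈ (T.powersetCard k).image (insert t), ∏ v ∈ e, w v
      = w t * ∑ e ∈ T.powersetCard k, ∏ v ∈ e, w v := by
  rw [Finset.sum_image, Finset.mul_sum]
  · apply Finset.sum_congr rfl
    intro e he
    have hte : t ∉ e := fun hte => h ((Finset.mem_powersetCard.mp he).1 hte)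
    rw [Finset.prod_insert hte]
  · intro e he f hf hef
    have hte : t ∉ e := fun hc => h ((Finset.mem_powersetCard.mp he).1 hc)
    have htf : t ∉ f := fun hc => h ((Finset.mem_powersetCard.mp hf).1 hc)
    have := congrArg (Finset.erase · t) hef
    simpa [Finset.erase_insert hte, Finset.erase_insert htf] using this

private lemma sum_pow_insert (t : ℕ) (T : Finset ℕ) (k : ℕ) (h : t ∉ T) (w : ℕ → ℝ) :
    ∑ e ∈ (insert t T).powersetCard (k+1), ∏ v ∈ e, w v
      = ∑ e ∈ T.powersetCard (k+1), ∏ v ∈ e, w v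
        + w t * ∑ e ∈ T.powersetCard k, ∏ v ∈ e, w v := by
  rw [Finset.powersetCard_succ_insert h, Finset.sum_union, sum_image_insert t T k h w]
  rw [Finset.disjoint_left]
  intro e he hec
  obtain ⟨f, hf, rfl⟩ := Finset.mem_image.mp hec
  exact h ((Finset.mem_powersetCard.mp he).1 (Finset.mem_insert_self t f))

private lemma sum_pairs (T : Finset ℕ) (w : ℕ → ℝ) :
    ∑ e ∈ T.powersetCard 2, ∏ v ∈ e, w v
      = ((∑ v ∈ T, w v)^2 - ∑ v ∈ T, (w v)^2)/2 := by
  induction T using Finset.induction_on with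
  | empty => rw [Finset.powersetCard_eq_empty.mpr (by simp)]; simp
  | insert t T h ih =>
    rw [sum_pow_insert t T 1 h w, ih, Finset.sum_insert h, Finset.sum_insert h]
    rw [Finset.powersetCard_one]
    rw [Finset.sum_map]
    simp only [Function.Embedding.coeFn_mk, Finset.prod_singleton]
    ring

set_option maxHeartbeats 3200000 in
/-- For every `n ≥ 6` and every `D ⊆ [n] \ {1,2,3,4}` with `|D| ≥ 2`,
`λ(H_2) ≤ √3/18`. -/
theorem lag_H2 (n : ℕ) (D : Finset ℕ) (hn : 6 ≤ n)
    (hD : D ⊆ Finset.Icc 1 n \ ({1, 2, 3, 4} : Finset ℕ)) (hcard : 2 ≤ D.card) :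
    (H2 n D hn hD).lag ≤ Real.sqrt 3 / 18 := by
  have hsqrt : (0:ℝ) ≤ Real.sqrt 3 / 18 := by positivity
  refine Real.sSup_le ?_ hsqrt
  rintro z ⟨w, ⟨hw0, hw1⟩, rfl⟩
  -- basic set names
  set S : Finset ℕ := Finset.Icc 1 n with hSdef
  set S1 : Finset ℕ := S.erase 1 with hS1def
  set V2 : Finset ℕ := S1.erase 2 with hV2def
  set A : Finset ℕ := V2 \ D with hAdef
  have hmemS : ∀ m : ℕ, m ∈ S ↔ 1 ≤ m ∧ m ≤ n := fun m => Finset.mem_Icc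
  have h1S : (1:ℕ) ∈ S := (hmemS 1).mpr ⟨le_refl 1, by omega⟩
  have hD5 : ∀ i ∈ D, 5 ≤ i ∧ i ≤ n := by
    intro i hi
    have := hD hi
    rw [Finset.mem_sdiff, Finset.mem_Icc] at this
    simp only [Finset.mem_insert, Finset.mem_singleton] at this
    omega
  have h2S1 : (2:ℕ) ∈ S1 := by
    rw [hS1def, Finset.mem_erase]
    exact ⟨by omega, (hmemS 2).mpr ⟨by omega, by omega⟩⟩
  have h1nS1 : (1:ℕ) ∉ S1 := Finset.notMem_erase 1 S
  have h2nV2 : (2:ℕ) ∉ V2 := Finset.notMem_erase 2 S1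
  have hSins : insert 1 S1 = S := Finset.insert_erase h1S
  have hS1ins : insert 2 V2 = S1 := Finset.insert_erase h2S1
  have hDV2 : D ⊆ V2 := by
    intro i hi
    have h5 := hD5 i hi
    rw [hV2def, Finset.mem_erase, hS1def, Finset.mem_erase]
    exact ⟨by omega, by omega, (hmemS i).mpr ⟨by omega, h5.2⟩⟩
  have h2nD : (2:ℕ) ∉ D := fun h => by have := hD5 2 h; omega
  have h3nD : (3:ℕ) ∉ D := fun h => by have := hD5 3 h; omega
  have h4nD : (4:ℕ) ∉ D := fun h => by have := hD5 4 h; omega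
  have hmemV2 : ∀ m : ℕ, 3 ≤ m → m ≤ n → m ∈ V2 := by
    intro m h3 hn'
    rw [hV2def, Finset.mem_erase, hS1def, Finset.mem_erase]
    exact ⟨by omega, by omega, (hmemS m).mpr ⟨by omega, hn'⟩⟩
  have h3A : (3:ℕ) ∈ A := Finset.mem_sdiff.mpr ⟨hmemV2 3 (by omega) (by omega), h3nD⟩
  have h4A : (4:ℕ) ∈ A := Finset.mem_sdiff.mpr ⟨hmemV2 4 (by omega) (by omega), h4nD⟩
  -- subset chains for nonnegativity
  have hS1S : S1 ⊆ S := Finset.erase_subset 1 S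
  have hV2S : V2 ⊆ S := (Finset.erase_subset 2 S1).trans hS1S
  have hAS : A ⊆ S := (Finset.sdiff_subset).trans hV2S
  have hDS : D ⊆ S := hDV2.trans hV2S
  have hwS : ∀ v ∈ S, 0 ≤ w v := hw0
  -- weight abbreviations
  set a : ℝ := ∑ v ∈ A, w v with hadef
  set d : ℝ := ∑ v ∈ D, w v with hddef
  set qA : ℝ := ∑ v ∈ A, (w v)^2 with hqAdef
  set qD : ℝ := ∑ v ∈ D, (w v)^2 with hqDdef
  -- edge set pieces
  set F : Finset (Finset ℕ) := ((Finset.Icc 1 n).powersetCard 3).filter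
      (fun e => (e ∩ ({1, 2} : Finset ℕ)).Nonempty) with hFdef
  set R : Finset (Finset ℕ) := (D.powersetCard 2).image (insert 2) with hRdef
  set Ad : Finset (Finset ℕ) := D.image (fun i => {3, 4, i}) with hAddef
  have hlag : (H2 n D hn hD).lagFun w = ∑ e ∈ (F \ R) ∪ Ad, ∏ v ∈ e, w v := rfl
  -- disjointness of F\R and Ad
  have hdisj : Disjoint (F \ R) Ad := by
    rw [Finset.disjoint_left]
    intro e he hea
    obtain ⟨i, hi, rfl⟩ := Finset.mem_image.mp hea
    have h5 := hD5 i hi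
    have hmem := (Finset.mem_sdiff.mp he).1
    rw [hFdef, Finset.mem_filter] at hmem
    obtain ⟨v, hv⟩ := hmem.2
    rw [Finset.mem_inter] at hv
    have hv1 := hv.1
    have hv2 := hv.2
    simp only [Finset.mem_insert, Finset.mem_singleton] at hv1 hv2
    omega
  -- R ⊆ F
  have hRF : R ⊆ F := by
    intro e he
    obtain ⟨p, hp, rfl⟩ := Finset.mem_image.mp he
    rw [Finset.mem_powersetCard] at hp
    have h2np : (2:ℕ) ∉ p := fun h => h2nD (hp.1 h)
    rw [hFdef, Finset.mem_filter, Finset.mem_powersetCard]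
    refine ⟨⟨?_, ?_⟩, ?_⟩
    · intro v hv
      rcases Finset.mem_insert.mp hv with rfl | hv
      · exact (hmemS 2).mpr ⟨by omega, by omega⟩
      · exact hDS (hp.1 hv)
    · rw [Finset.card_insert_of_notMem h2np, hp.2]
    · exact ⟨2, Finset.mem_inter.mpr ⟨Finset.mem_insert_self 2 p, by simp⟩⟩
  -- decompose the filtered triple sum
  have hP3 : S.powersetCard 3 = S1.powersetCard 3 ∪ (S1.powersetCard 2).image (insert 1) := by
    conv_lhs => rw [← hSins]
    exact Finset.powersetCard_succ_insert h1nS1 2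
  have hP3' : S1.powersetCard 3 = V2.powersetCard 3 ∪ (V2.powersetCard 2).image (insert 2) := by
    conv_lhs => rw [← hS1ins]
    exact Finset.powersetCard_succ_insert h2nV2 2
  have hF2 : F = ((V2.powersetCard 2).image (insert 2)) ∪ ((S1.powersetCard 2).image (insert 1)) := by
    rw [hFdef]
    have : (Finset.Icc 1 n).powersetCard 3 = S.powersetCard 3 := by rw [hSdef]
    rw [this, hP3, Finset.filter_union, hP3', Finset.filter_union]
    have e1 : (V2.powersetCard 3).filter (fun e => (e ∩ ({1, 2} : Finset ℕ)).Nonempty) = ∅ := by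
      apply Finset.filter_false_of_mem
      intro e he hne
      obtain ⟨v, hv⟩ := hne
      rw [Finset.mem_inter] at hv
      have hsub := (Finset.mem_powersetCard.mp he).1
      have hv2 := hv.2
      simp only [Finset.mem_insert, Finset.mem_singleton] at hv2
      have hvV2 := hsub hv.1
      rcases hv2 with rfl | rfl
      · exact h1nS1 ((Finset.erase_subset 2 S1) hvV2)
      · exact h2nV2 hvV2
    have e2 : ((V2.powersetCard 2).image (insert 2)).filter
        (fun e => (e ∩ ({1, 2} : Finset ℕ)).Nonempty)
        = (V2.powersetCard 2).image (insert 2) := by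
      apply Finset.filter_true_of_mem
      intro e he
      obtain ⟨p, hp, rfl⟩ := Finset.mem_image.mp he
      exact ⟨2, Finset.mem_inter.mpr ⟨Finset.mem_insert_self 2 p, by simp⟩⟩
    have e3 : ((S1.powersetCard 2).image (insert 1)).filter
        (fun e => (e ∩ ({1, 2} : Finset ℕ)).Nonempty)
        = (S1.powersetCard 2).image (insert 1) := by
      apply Finset.filter_true_of_mem
      intro e he
      obtain ⟨p, hp, rfl⟩ := Finset.mem_image.mp he
      exact ⟨1, Finset.mem_inter.mpr ⟨Finset.mem_insert_self 1 p, by simp⟩⟩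
    rw [e1, e2, e3, Finset.empty_union]
  have hdisj2 : Disjoint ((V2.powersetCard 2).image (insert 2))
      ((S1.powersetCard 2).image (insert 1)) := by
    rw [Finset.disjoint_left]
    intro e he1 he2
    obtain ⟨p, hp, rfl⟩ := Finset.mem_image.mp he1
    obtain ⟨q, hq, he⟩ := Finset.mem_image.mp he2
    have h1mem : (1:ℕ) ∈ insert 2 p := by rw [← he]; exact Finset.mem_insert_self 1 q
    rcases Finset.mem_insert.mp h1mem with h | h
    · omega
    · exact h1nS1 ((Finset.erase_subset 2 S1) ((Finset.mem_powersetCard.mp hp).1 h))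
  have h1nS1' : (1:ℕ) ∉ S1 := h1nS1
  have hsumF : ∑ e ∈ F, ∏ v ∈ e, w v
      = w 2 * ∑ e ∈ V2.powersetCard 2, ∏ v ∈ e, w v
        + w 1 * ∑ e ∈ S1.powersetCard 2, ∏ v ∈ e, w v := by
    rw [hF2, Finset.sum_union hdisj2, sum_image_insert 2 V2 2 h2nV2 w,
      sum_image_insert 1 S1 2 h1nS1' w]
  have hsumR : ∑ e ∈ R, ∏ v ∈ e, w v
      = w 2 * ∑ e ∈ D.powersetCard 2, ∏ v ∈ e, w v := by
    rw [hRdef, sum_image_insert 2 D 2 h2nD w]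
  have hsumAd : ∑ e ∈ Ad, ∏ v ∈ e, w v = w 3 * w 4 * d := by
    rw [hAddef, Finset.sum_image]
    · rw [hddef, Finset.mul_sum]
      apply Finset.sum_congr rfl
      intro i hi
      have h5 := hD5 i hi
      have h3m : (3:ℕ) ∉ ({4, i} : Finset ℕ) := by
        simp only [Finset.mem_insert, Finset.mem_singleton]; omega
      have h4m : (4:ℕ) ∉ ({i} : Finset ℕ) := by
        simp only [Finset.mem_singleton]; omega
      rw [Finset.prod_insert h3m, Finset.prod_insert h4m, Finset.prod_singleton]
      ring
    · intro i hi j hj hij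
      have h5i := hD5 i hi
      have himem : i ∈ ({3, 4, j} : Finset ℕ) := by
        rw [← show ({3, 4, i} : Finset ℕ) = {3, 4, j} from hij]; simp
      simp only [Finset.mem_insert, Finset.mem_singleton] at himem
      omega
  -- sum decompositions
  have hmV2 : ∑ v ∈ V2, w v = a + d := by
    rw [hadef, hddef, hAdef]
    exact (Finset.sum_sdiff hDV2).symm
  have hqV2 : ∑ v ∈ V2, (w v)^2 = qA + qD := by
    rw [hqAdef, hqDdef, hAdef]
    exact (Finset.sum_sdiff hDV2).symm
  have hmS1 : ∑ v ∈ S1, w v = w 2 + (a + d) := by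
    rw [← hS1ins, Finset.sum_insert h2nV2, hmV2]
  have hqS1 : ∑ v ∈ S1, (w v)^2 = (w 2)^2 + (qA + qD) := by
    rw [← hS1ins, Finset.sum_insert h2nV2, hqV2]
  have hsum1 : w 1 + w 2 + a + d = 1 := by
    have hS : ∑ v ∈ S, w v = 1 := hw1
    rw [← hSins, Finset.sum_insert h1nS1, hmS1] at hS
    linarith
  -- total value
  have hval : (H2 n D hn hD).lagFun w
      = w 1*((w 2+(a+d))^2 - (w 2)^2 - qA - qD)/2
        + w 2*((a+d)^2 - d^2 - qA)/2 + (w 3 * w 4)*d := by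
    rw [hlag, Finset.sum_union hdisj, Finset.sum_sdiff_eq_sub hRF, hsumF, hsumR, hsumAd,
      sum_pairs V2 w, sum_pairs S1 w, sum_pairs D w, hmV2, hqV2, hmS1, hqS1]
    ring
  rw [hval]
  -- nonnegativity facts
  have hx : 0 ≤ w 1 := hwS 1 h1S
  have hy : 0 ≤ w 2 := hwS 2 (hS1S h2S1)
  have hw3 : 0 ≤ w 3 := hwS 3 (hAS h3A)
  have hw4 : 0 ≤ w 4 := hwS 4 (hAS h4A)
  have ha : 0 ≤ a := Finset.sum_nonneg (fun v hv => hwS v (hAS hv))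
  have hd : 0 ≤ d := Finset.sum_nonneg (fun v hv => hwS v (hDS hv))
  have hqDn : 0 ≤ qD := Finset.sum_nonneg (fun v _ => sq_nonneg _)
  have h34A : ({3, 4} : Finset ℕ) ⊆ A := by
    intro v hv
    simp only [Finset.mem_insert, Finset.mem_singleton] at hv
    rcases hv with rfl | rfl
    · exact h3A
    · exact h4A
  have hua : w 3 + w 4 ≤ a := by
    have := Finset.sum_le_sum_of_subset_of_nonneg h34A
      (fun v hv _ => hwS v (hAS hv))
    rw [Finset.sum_insert (by simp), Finset.sum_singleton] at this
    exact this
  have hqA2 : (w 3)^2 + (w 4)^2 ≤ qA := by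
    have := Finset.sum_le_sum_of_subset_of_nonneg (f := fun v => (w v)^2) h34A
      (fun v _ _ => sq_nonneg _)
    rw [Finset.sum_insert (by simp), Finset.sum_singleton] at this
    exact this
  have hqAu : (w 3 + w 4)^2/2 ≤ qA := by nlinarith [sq_nonneg (w 3 - w 4)]
  have hpu : w 3 * w 4 ≤ (w 3 + w 4)^2/4 := by nlinarith [sq_nonneg (w 3 - w 4)]
  have hr2 : (Real.sqrt 3)^2 = 3 := Real.sq_sqrt (by norm_num)
  have hr17 : (17:ℝ)/10 ≤ Real.sqrt 3 := by
    nlinarith [Real.sqrt_nonneg 3, hr2]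
  exact final_bound (w 1) (w 2) a d (w 3 + w 4) (w 3 * w 4) qA qD (Real.sqrt 3)
    hx hy ha hd (by linarith) hua hqDn hqAu hpu hsum1 hr2 hr17
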